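/- Let A be an (n+1)×(n+1) matrix over a commutative ring, with n ≥ 1. Denote by A[i;k] the matrix obtained by deleting row i and column k, and by A[ij;kl] the matrix obtained by deleting rows i,j and columns k,l (i<j, k<l). Then det A · det A[ij;kl] = det A[i;k] · det A[j;l] − det A[i;l] · det A[j;k]. -/

import Mathlib

open Matrix
open Matrix

/-- determinant after replacing a column by a multiple of a standard basis vector -/
lemma det_updateColumn_single {R : Type*} [CommRing R] {m : ℕ}
    (A : Matrix (Fin (m+1)) (Fin (m+1)) R) (r c : Fin (m+1)) (x : R) :
    (A.updateCol c (Pi.single r x)).det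
      = x * ((-1 : R) ^ ((r : ℕ) + (c : ℕ)) * (A.submatrix r.succAbove c.succAbove).det) := by
  have h1 : (Pi.single r x : Fin (m+1) → R) = x • (Pi.single r 1 : Fin (m+1) → R) := by
    funext s
    simp [Pi.single_apply]
  rw [h1, det_updateCol_smul]
  have h2 : A.updateCol c (Pi.single r 1) = (Aᵀ.updateRow c (Pi.single r 1))ᵀ := by
    rw [← updateCol_transpose, transpose_transpose]
  rw [h2, det_transpose, ← Matrix.adjugate_apply,
    Matrix.adjugate_fin_succ_eq_det_submatrix]
  rw [show (Aᵀ.submatrix c.succAbove r.succAbove) = (A.submatrix r.succAbove c.succAbove)ᵀ from rfl,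
    det_transpose]
  ring_nf

/-- commuting two successive `succAbove` deletions -/
lemma succAbove_succAbove_comm {n : ℕ} (i j : Fin (n+2)) (h : i < j) (a : Fin n) :
    j.succAbove ((i.castPred (Fin.ne_of_lt (Fin.lt_of_lt_of_le h j.le_last))).succAbove a)
      = i.succAbove ((j.pred (Fin.ne_zero_of_lt h)).succAbove a) := by
  have hij : (i : ℕ) < (j : ℕ) := h
  apply Fin.ext
  simp only [Fin.succAbove, Fin.lt_def, Fin.coe_castSucc, Fin.coe_castPred, Fin.val_succ,
    Fin.coe_pred]
  split_ifs <;> simp_all <;> omega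

lemma submatrix_updateColumn_of_inj {R : Type*} {m o p q : Type*} [DecidableEq o] [DecidableEq q]
    (A : Matrix m o R) (f : p → m) {g : q → o} (hg : Function.Injective g)
    (c : o) (c' : q) (hc : g c' = c) (v : m → R) :
    (A.updateCol c v).submatrix f g = (A.submatrix f g).updateCol c' (v ∘ f) := by
  ext a b
  by_cases hb : b = c'
  · subst hb
    simp [hc]
  · have : g b ≠ c := fun h => hb (hg (h.trans hc.symm))
    simp [updateCol_ne this, updateCol_ne hb]

lemma det_one_updateColumn_two {R : Type*} [CommRing R] {m : Type*} [DecidableEq m] [Fintype m]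
    (k l : m) (hkl : k ≠ l) (u v : m → R) :
    (((1 : Matrix m m R).updateCol k u).updateCol l v).det
      = u k * v l - u l * v k := by
  set M := ((1 : Matrix m m R).updateCol k u).updateCol l v with hM
  have hMapp : ∀ p q, M p q = if q = l then v p else if q = k then u p else
      (if p = q then (1:R) else 0) := by
    intro p q
    simp [hM, updateCol_apply, one_apply]
  rw [det_apply]
  have hswap : (1 : Equiv.Perm m) ≠ Equiv.swap k l := by
    intro h
    have := congrFun (congrArg (fun e : Equiv.Perm m => (e : m → m)) h) k
    simp [Equiv.swap_apply_left] at this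
    exact hkl this
  have hzero : ∀ σ ∈ (Finset.univ : Finset (Equiv.Perm m)), σ ∉ ({1, Equiv.swap k l} : Finset (Equiv.Perm m)) →
      Equiv.Perm.sign σ • ∏ q, M (σ q) q = 0 := by
    intro σ _ hσ
    simp only [Finset.mem_insert, Finset.mem_singleton, not_or] at hσ
    obtain ⟨h1, h2⟩ := hσ
    by_cases hex : ∃ q, q ≠ k ∧ q ≠ l ∧ σ q ≠ q
    · obtain ⟨q, hq1, hq2, hq3⟩ := hex
      have : M (σ q) q = 0 := by
        rw [hMapp]
        simp [hq1, hq2, hq3]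
      rw [Finset.prod_eq_zero (f := fun q => M (σ q) q) (Finset.mem_univ q) this, smul_zero]
    · exfalso
      push_neg at hex
      have hfix : ∀ q, q ≠ k → q ≠ l → σ q = q := hex
      have hkmem : σ k = k ∨ σ k = l := by
        by_contra hc
        push_neg at hc
        have := hfix (σ k) hc.1 hc.2
        exact hc.1 (σ.injective this)
      rcases hkmem with hk | hk
      · have hl : σ l = l := by
          by_contra hl
          have h' : σ l ≠ k := fun h => hkl (σ.injective (h.trans hk.symm)).symm
          exact hl (σ.injective (hfix (σ l) h' hl))
        apply h1
        ext q
        by_cases hq1 : q = k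
        · simp [hq1, hk]
        by_cases hq2 : q = l
        · simp [hq2, hl]
        · simp [hfix q hq1 hq2]
      · have hl : σ l = k := by
          by_contra hl
          have h' : σ l ≠ l := fun h => hkl (σ.injective (hk.trans h.symm))
          exact h' (σ.injective (hfix (σ l) hl h'))
        apply h2
        ext q
        by_cases hq1 : q = k
        · simp [hq1, hk, Equiv.swap_apply_left]
        by_cases hq2 : q = l
        · simp [hq2, hl, Equiv.swap_apply_right]
        · simp [hfix q hq1 hq2, Equiv.swap_apply_of_ne_of_ne hq1 hq2]
  rw [← Finset.sum_subset (Finset.subset_univ ({1, Equiv.swap k l} : Finset (Equiv.Perm m)))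
    (fun σ _ hσ => hzero σ (Finset.mem_univ σ) hσ)]
  rw [Finset.sum_pair hswap]
  have hprod1 : ∏ q, M ((1 : Equiv.Perm m) q) q = u k * v l := by
    rw [← Finset.prod_subset (Finset.subset_univ ({k, l} : Finset m))
      (fun q _ hq => ?_)]
    · rw [Finset.prod_pair hkl]
      simp only [Equiv.Perm.one_apply, hMapp]
      simp [hkl]
    · simp only [Finset.mem_insert, Finset.mem_singleton, not_or] at hq
      simp only [Equiv.Perm.one_apply, hMapp]
      simp [hq.1, hq.2]
  have hprod2 : ∏ q, M (Equiv.swap k l q) q = u l * v k := by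
    rw [← Finset.prod_subset (Finset.subset_univ ({k, l} : Finset m))
      (fun q _ hq => ?_)]
    · rw [Finset.prod_pair hkl]
      simp only [hMapp, Equiv.swap_apply_left, Equiv.swap_apply_right]
      simp [hkl]
    · simp only [Finset.mem_insert, Finset.mem_singleton, not_or] at hq
      rw [Equiv.swap_apply_of_ne_of_ne hq.1 hq.2, hMapp]
      simp [hq.1, hq.2]
  rw [hprod1, hprod2]
  simp [Equiv.Perm.sign_swap hkl]
  ring

lemma desnanot_jacobi_key {R : Type*} [CommRing R] (n : ℕ)
    (A : Matrix (Fin (n + 2)) (Fin (n + 2)) R)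
    (i j k l : Fin (n + 2)) (hij : i < j) (hkl : k < l) :
    A.det * (A.det *
      (A.submatrix
        (fun a : Fin n => i.succAbove ((j.pred (Fin.ne_zero_of_lt hij)).succAbove a))
        (fun a : Fin n => k.succAbove ((l.pred (Fin.ne_zero_of_lt hkl)).succAbove a))).det)
    = A.det * ((A.submatrix i.succAbove k.succAbove).det * (A.submatrix j.succAbove l.succAbove).det
      - (A.submatrix i.succAbove l.succAbove).det * (A.submatrix j.succAbove k.succAbove).det) := by
  classical
  set D := A.det with hD
  have hkl' : k ≠ l := Fin.ne_of_lt hkl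
  have hij' : i ≠ j := Fin.ne_of_lt hij
  set B : Matrix (Fin (n+2)) (Fin (n+2)) R :=
    ((1 : Matrix (Fin (n+2)) (Fin (n+2)) R).updateCol k
      (fun p => adjugate A p i)).updateCol l (fun p => adjugate A p j) with hB
  set M : Matrix (Fin (n+2)) (Fin (n+2)) R :=
    (A.updateCol k (Pi.single i D)).updateCol l (Pi.single j D) with hM
  -- A * B = M
  have hAB : A * B = M := by
    ext p q
    rw [mul_apply]
    by_cases hq1 : q = l
    · subst hq1
      rw [Finset.sum_congr rfl fun r _ => by rw [hB, updateCol_self]]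
      rw [← mul_apply, mul_adjugate, hM, updateCol_self]
      simp [Pi.single_apply, one_apply, hD]
    by_cases hq2 : q = k
    · subst hq2
      rw [Finset.sum_congr rfl fun r _ =>
        by rw [hB, updateCol_ne hkl', updateCol_self]]
      rw [← mul_apply, mul_adjugate, hM, updateCol_ne hkl', updateCol_self]
      simp [Pi.single_apply, one_apply, hD]
    · rw [Finset.sum_congr rfl fun r _ => by rw [hB, updateCol_ne hq1, updateCol_ne hq2]]
      rw [← mul_apply, mul_one, hM, updateCol_ne hq1, updateCol_ne hq2]
  -- determinant of B
  have hdetB : B.det = adjugate A k i * adjugate A l j - adjugate A l i * adjugate A k j :=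
    det_one_updateColumn_two k l hkl' _ _
  -- determinant of M
  have hk_ne : k ≠ Fin.last (n+1) := Fin.ne_of_lt (Fin.lt_of_lt_of_le hkl l.le_last)
  have hi_ne : i ≠ Fin.last (n+1) := Fin.ne_of_lt (Fin.lt_of_lt_of_le hij j.le_last)
  have hsingle : (Pi.single i D ∘ j.succAbove : Fin (n+1) → R)
      = Pi.single (i.castPred hi_ne) D := by
    funext a
    have hiff : j.succAbove a = i ↔ a = i.castPred hi_ne := by
      constructor
      · intro h
        exact Fin.succAbove_right_injective
          (h.trans (Fin.succAbove_castPred_of_lt j i hij).symm)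
      · intro h
        rw [h]
        exact Fin.succAbove_castPred_of_lt j i hij
    simp only [Function.comp_apply, Pi.single_apply]
    by_cases h : a = i.castPred hi_ne
    · rw [if_pos h, if_pos (hiff.mpr h)]
    · rw [if_neg h, if_neg (fun hh => h (hiff.mp hh))]
  have hdetM : M.det = D * ((-1 : R) ^ ((j : ℕ) + (l : ℕ)) *
      (D * ((-1 : R) ^ ((i : ℕ) + (k : ℕ)) *
        (A.submatrix
          (fun a : Fin n => i.succAbove ((j.pred (Fin.ne_zero_of_lt hij)).succAbove a))
          (fun a : Fin n => k.succAbove ((l.pred (Fin.ne_zero_of_lt hkl)).succAbove a))).det))) := by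
    rw [hM, det_updateColumn_single]
    rw [submatrix_updateColumn_of_inj _ j.succAbove Fin.succAbove_right_injective k
      (k.castPred hk_ne) (Fin.succAbove_castPred_of_lt l k hkl) _]
    rw [hsingle, det_updateColumn_single]
    rw [submatrix_submatrix]
    have hrow : (j.succAbove ∘ (i.castPred hi_ne).succAbove)
        = fun a : Fin n => i.succAbove ((j.pred (Fin.ne_zero_of_lt hij)).succAbove a) :=
      funext fun a => succAbove_succAbove_comm i j hij a
    have hcol : (l.succAbove ∘ (k.castPred hk_ne).succAbove)
        = fun a : Fin n => k.succAbove ((l.pred (Fin.ne_zero_of_lt hkl)).succAbove a) :=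
      funext fun a => succAbove_succAbove_comm k l hkl a
    rw [hrow, hcol, Fin.coe_castPred, Fin.coe_castPred]
  -- adjugate entries as minors
  have hki : adjugate A k i
      = (-1 : R) ^ ((i : ℕ) + (k : ℕ)) * (A.submatrix i.succAbove k.succAbove).det :=
    adjugate_fin_succ_eq_det_submatrix A k i
  have hlj : adjugate A l j
      = (-1 : R) ^ ((j : ℕ) + (l : ℕ)) * (A.submatrix j.succAbove l.succAbove).det :=
    adjugate_fin_succ_eq_det_submatrix A l j
  have hli : adjugate A l i
      = (-1 : R) ^ ((i : ℕ) + (l : ℕ)) * (A.submatrix i.succAbove l.succAbove).det :=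
    adjugate_fin_succ_eq_det_submatrix A l i
  have hkj : adjugate A k j
      = (-1 : R) ^ ((j : ℕ) + (k : ℕ)) * (A.submatrix j.succAbove k.succAbove).det :=
    adjugate_fin_succ_eq_det_submatrix A k j
  -- the main equation
  have E : M.det = D * B.det := by rw [← hAB, det_mul, hD]
  rw [hdetM, hdetB, hki, hlj, hli, hkj] at E
  simp only [pow_add] at E
  set m2 := (A.submatrix
      (fun a : Fin n => i.succAbove ((j.pred (Fin.ne_zero_of_lt hij)).succAbove a))
      (fun a : Fin n => k.succAbove ((l.pred (Fin.ne_zero_of_lt hkl)).succAbove a))).det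
  set mik := (A.submatrix i.succAbove k.succAbove).det
  set mjl := (A.submatrix j.succAbove l.succAbove).det
  set mil := (A.submatrix i.succAbove l.succAbove).det
  set mjk := (A.submatrix j.succAbove k.succAbove).det
  set s : R := (-1 : R) ^ (i : ℕ) * (-1 : R) ^ (j : ℕ) * (-1 : R) ^ (k : ℕ) * (-1 : R) ^ (l : ℕ)
    with hs
  have hpow : ∀ a : ℕ, ((-1 : R) ^ a) * ((-1 : R) ^ a) = 1 := fun a => by
    rw [← mul_pow, neg_mul_neg, mul_one, one_pow]
  have hss : s * s = 1 := by
    have h2 := hpow (i : ℕ)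
    have h3 := hpow (j : ℕ)
    have h4 := hpow (k : ℕ)
    have h5 := hpow (l : ℕ)
    rw [hs]
    linear_combination ((-1:R)^(j:ℕ)*(-1:R)^(j:ℕ)*(-1:R)^(k:ℕ)*(-1:R)^(k:ℕ)*(-1:R)^(l:ℕ)*(-1:R)^(l:ℕ)) * h2
      + ((-1:R)^(k:ℕ)*(-1:R)^(k:ℕ)*(-1:R)^(l:ℕ)*(-1:R)^(l:ℕ)) * h3
      + ((-1:R)^(l:ℕ)*(-1:R)^(l:ℕ)) * h4 + h5
  have E' : D * (D * m2) * s = D * (mik * mjl - mil * mjk) * s := by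
    rw [hs]; linear_combination E
  linear_combination s * E' + (D * (mik * mjl - mil * mjk) - D * (D * m2)) * hss

/-- The Desnanot–Jacobi identity: for an `(n+2) × (n+2)` matrix `A` over a commutative ring
(i.e. size at least `2 × 2`), with rows `i < j` and columns `k < l`,
`det A · det A[ij;kl] = det A[i;k] · det A[j;l] − det A[i;l] · det A[j;k]`,
where minors are obtained by deleting the indicated rows and columns
(realized via `Fin.succAbove` embeddings). -/
theorem desnanot_jacobi {R : Type*} [CommRing R] (n : ℕ)
    (A : Matrix (Fin (n + 2)) (Fin (n + 2)) R)
    (i j k l : Fin (n + 2)) (hij : i < j) (hkl : k < l) :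
    A.det *
      (A.submatrix
        (fun a : Fin n => i.succAbove ((j.pred (Fin.ne_zero_of_lt hij)).succAbove a))
        (fun a : Fin n => k.succAbove ((l.pred (Fin.ne_zero_of_lt hkl)).succAbove a))).det
    = (A.submatrix i.succAbove k.succAbove).det * (A.submatrix j.succAbove l.succAbove).det
      - (A.submatrix i.succAbove l.succAbove).det * (A.submatrix j.succAbove k.succAbove).det := by
  classical
  set S := MvPolynomial (Fin (n + 2) × Fin (n + 2)) ℤ with hS
  set G : Matrix (Fin (n+2)) (Fin (n+2)) S := Matrix.of fun p q => MvPolynomial.X (p, q) with hG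
  have hGdet : G.det ≠ 0 := by
    intro h0
    have h1 := (MvPolynomial.eval
      (fun pq : Fin (n+2) × Fin (n+2) => if pq.1 = pq.2 then (1:ℤ) else 0)).map_det G
    rw [h0, map_zero, RingHom.mapMatrix_apply] at h1
    have h2 : G.map (MvPolynomial.eval
        (fun pq : Fin (n+2) × Fin (n+2) => if pq.1 = pq.2 then (1:ℤ) else 0))
        = (1 : Matrix (Fin (n+2)) (Fin (n+2)) ℤ) := by
      ext p q
      simp [hG, one_apply]
    rw [h2, det_one] at h1
    exact one_ne_zero h1.symm
  have hGkey := mul_left_cancel₀ hGdet (desnanot_jacobi_key n G i j k l hij hkl)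
  set φ : S →+* R := MvPolynomial.eval₂Hom (Int.castRingHom R) (fun pq => A pq.1 pq.2) with hφ
  have hφG : G.map φ = A := by
    ext p q
    show φ (MvPolynomial.X (p, q)) = A p q
    rw [hφ]
    exact MvPolynomial.eval₂Hom_X' (Int.castRingHom R) _ (p, q)
  have h2 := congrArg φ hGkey
  simp only [_root_.map_mul, map_sub, φ.map_det, RingHom.mapMatrix_apply, ← submatrix_map,
    hφG] at h2
  exact h2
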